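/- arXiv:1106.4732 — 2 statements merged into one kernel-verified Lean document; each statement's English description precedes it below -/
import Mathlib

section
/- With notation as in the context, assume N(𝔞) = κ|Δ|/D, λ ∈ 𝔡₂⁻¹𝔞 with 𝔡₂⁻¹𝔞 = O_k·λ + 𝔞 and N_{k/ℚ}(λ) − κ ∈ N(𝔞)ℤ, and let O_{𝔞,λ,B} = { [α,β] ∈ B : α ∈ 𝔡₂⁻¹, β ∈ 𝔞⁻¹, α + λβ ∈ O_k }. Then for every b ∈ k^×, conjugation by i(b) = [b, 0; 0, b̄] inside M₂(k) satisfies i(b)·O_{𝔞,λ,B}·i(b)⁻¹ = O_{𝔞_b, λ_b, B}, where 𝔞_b = (b̄b⁻¹)·𝔞 and λ_b = b̄b⁻¹·λ; moreover 𝔞_b and λ_b again satisfy the hypotheses (N(𝔞_b) = N(𝔞) = κ|Δ|/D, λ_b ∈ 𝔡₂⁻¹𝔞_b generates 𝔡₂⁻¹𝔞_b modulo 𝔞_b, and N_{k/ℚ}(λ_b) − κ ∈ N(𝔞_b)ℤ). (This is the principal-idèle case of the conjugation action on the set of maximal orders O_{𝔞,λ,B}.) -/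
noncomputable section

open Matrix NumberField FractionalIdeal
open scoped Quaternion nonZeroDivisors

variable (k : Type*) [Field k] [NumberField k]

/-- The matrix `[α, β] = [α, β; κ·σ(β), σ(α)] ∈ M₂(k)` (`σ` the conjugation of `k/ℚ`,
`κ ∈ ℚ^×`). -/
def qmat (σ : k ≃ₐ[ℚ] k) (κ : ℚ) (α β : k) : Matrix (Fin 2) (Fin 2) k :=
  !![α, β; (κ : k) * σ β, σ α]

/-- The embedding `i : k → B ⊆ M₂(k)`, `i(b) = [b, 0; 0, b̄]`. -/
def imat (σ : k ≃ₐ[ℚ] k) (b : k) : Matrix (Fin 2) (Fin 2) k :=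
  !![b, 0; 0, σ b]

/-- The set `O_{𝔞,λ,B} = { [α,β] ∈ B : α ∈ 𝔡₂⁻¹, β ∈ 𝔞⁻¹, α + λβ ∈ O_k }`. -/
def Oset (σ : k ≃ₐ[ℚ] k) (κ : ℚ) (𝔡₂ 𝔞 : FractionalIdeal (𝓞 k)⁰ k) (lam : k) :
    Set (Matrix (Fin 2) (Fin 2) k) :=
  {M | ∃ α β : k, M = qmat k σ κ α β ∧ α ∈ 𝔡₂⁻¹ ∧ β ∈ 𝔞⁻¹ ∧
    α + lam * β ∈ (1 : FractionalIdeal (𝓞 k)⁰ k)}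

/-- A prime `p` ramifies in the quaternion algebra `B ≅ (Δ, κ / ℚ)` if and only if
`ℚ_p ⊗_ℚ B ≅ (Δ, κ / ℚ_p)` is a division ring, i.e. every nonzero element is a unit. -/
def RamifiedAt (Δ : ℤ) (κ : ℚ) (p : ℕ) [Fact p.Prime] : Prop :=
  ∀ x : ℍ[ℚ_[p], ((Δ : ℚ_[p])), ((κ : ℚ_[p]))], x ≠ 0 → IsUnit x

/-- Conjugation by `i(b)`, `b ∈ k^×`, carries `O_{𝔞,λ,B}` to
`O_{𝔞_b,λ_b,B}` with `𝔞_b = (b̄b⁻¹)𝔞` and `λ_b = b̄b⁻¹λ`, and the data `(𝔞_b, λ_b)` again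
satisfies the defining hypotheses. -/
theorem conjugation_of_Oset
    (Δ : ℤ) (hΔneg : Δ < 0)
    (hdeg : Module.finrank ℚ k = 2) (hdisc : NumberField.discr k = Δ)
    (s : k) (hs : s ^ 2 = (Δ : k))
    (σ : k ≃ₐ[ℚ] k) (hσs : σ s = -s)
    (κ : ℚ) (hκ : κ ≠ 0)
    (D D₁ : ℕ)
    (hD : Squarefree D ∧ ∀ (p : ℕ) [Fact p.Prime], (p ∣ D ↔ RamifiedAt Δ κ p))
    (hD₁ : Squarefree D₁ ∧
      ∀ (p : ℕ) [Fact p.Prime], (p ∣ D₁ ↔ (RamifiedAt Δ κ p ∧ (p : ℤ) ∣ Δ)))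
    (𝔡₁ : Ideal (𝓞 k))
    (h𝔡₁ : ∃ P : ℕ → Ideal (𝓞 k),
      (∀ p ∈ D₁.primeFactors, (P p).IsPrime ∧ (p : 𝓞 k) ∈ P p) ∧
      𝔡₁ = ∏ p ∈ D₁.primeFactors, P p)
    (𝔡₂ : FractionalIdeal (𝓞 k)⁰ k)
    (h𝔡₂ : 𝔡₂ = spanSingleton (𝓞 k)⁰ s * ((𝔡₁ : FractionalIdeal (𝓞 k)⁰ k))⁻¹)
    (𝔞 : FractionalIdeal (𝓞 k)⁰ k) (h𝔞0 : 𝔞 ≠ 0)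
    (h𝔞N : FractionalIdeal.absNorm 𝔞 = κ * ((|Δ| : ℤ) : ℚ) / (D : ℚ))
    (lam : k) (hlam : lam ∈ 𝔡₂⁻¹ * 𝔞)
    (hlamgen : 𝔡₂⁻¹ * 𝔞 = spanSingleton (𝓞 k)⁰ lam + 𝔞)
    (hlamnorm : ∃ n : ℤ, Algebra.norm ℚ lam - κ = n * FractionalIdeal.absNorm 𝔞)
    -- the element `b ∈ k^×`, and the twisted data `𝔞_b = (b̄b⁻¹)𝔞`, `λ_b = b̄b⁻¹λ`
    (b : k) (hb : b ≠ 0) :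
    -- `i(b)·O_{𝔞,λ,B}·i(b)⁻¹ = O_{𝔞_b,λ_b,B}` ...
    {N : Matrix (Fin 2) (Fin 2) k |
        ∃ M ∈ Oset k σ κ 𝔡₂ 𝔞 lam, N = imat k σ b * M * (imat k σ b)⁻¹}
      = Oset k σ κ 𝔡₂ (spanSingleton (𝓞 k)⁰ (σ b * b⁻¹) * 𝔞) (σ b * b⁻¹ * lam) ∧
    -- ... and `(𝔞_b, λ_b)` again satisfies the hypotheses:
    FractionalIdeal.absNorm (spanSingleton (𝓞 k)⁰ (σ b * b⁻¹) * 𝔞)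
      = κ * ((|Δ| : ℤ) : ℚ) / (D : ℚ) ∧
    (σ b * b⁻¹ * lam) ∈ 𝔡₂⁻¹ * (spanSingleton (𝓞 k)⁰ (σ b * b⁻¹) * 𝔞) ∧
    𝔡₂⁻¹ * (spanSingleton (𝓞 k)⁰ (σ b * b⁻¹) * 𝔞)
      = spanSingleton (𝓞 k)⁰ (σ b * b⁻¹ * lam) + spanSingleton (𝓞 k)⁰ (σ b * b⁻¹) * 𝔞 ∧
    ∃ n : ℤ, Algebra.norm ℚ (σ b * b⁻¹ * lam) - κ
      = n * FractionalIdeal.absNorm (spanSingleton (𝓞 k)⁰ (σ b * b⁻¹) * 𝔞) := by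
  classical
  have hsb : σ b ≠ 0 := fun h => hb (σ.injective (by simp [h]))
  have hu : σ b * b⁻¹ ≠ 0 := mul_ne_zero hsb (inv_ne_zero hb)
  -- σ is an involution
  have hσσ : ∀ x : k, σ (σ x) = x := by
    have hcard : Fintype.card (k ≃ₐ[ℚ] k) ≤ 2 := by
      calc Fintype.card (k ≃ₐ[ℚ] k) = Fintype.card (k →ₐ[ℚ] k) :=
            Fintype.card_congr (algEquivEquivAlgHom ℚ k).toEquiv
        _ ≤ Module.finrank k (k →ₗ[ℚ] k) := finrank_algHom ℚ k
        _ = Module.finrank ℚ k := Module.finrank_linearMap_self ℚ k k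
        _ = 2 := hdeg
    have hdvd : orderOf σ ∣ 2 := by
      have h1 := orderOf_dvd_card (G := k ≃ₐ[ℚ] k) (x := σ)
      have h2 : 0 < Fintype.card (k ≃ₐ[ℚ] k) := Fintype.card_pos
      have hle : orderOf σ ≤ 2 := le_trans (Nat.le_of_dvd h2 h1) hcard
      have hpos : 0 < orderOf σ := orderOf_pos σ
      interval_cases h : orderOf σ
      · exact one_dvd 2
      · exact dvd_rfl
    have h2 : σ ^ 2 = 1 := orderOf_dvd_iff_pow_eq_one.mp hdvd
    intro x
    have := congrFun (congrArg (DFunLike.coe) h2) x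
    simpa [pow_two, AlgEquiv.mul_apply] using this
  -- norm of σ b * b⁻¹ is 1
  have hnormu : Algebra.norm ℚ (σ b * b⁻¹) = 1 := by
    have hnb : Algebra.norm ℚ b ≠ 0 := by
      rwa [ne_eq, Algebra.norm_eq_zero_iff]
    have h1 : σ b * b⁻¹ * b = σ b := by field_simp
    have h2 := congrArg (Algebra.norm ℚ) h1
    rw [_root_.map_mul, Algebra.norm_eq_of_algEquiv] at h2
    exact mul_right_cancel₀ hnb (h2.trans (one_mul _).symm)
  have habsu : FractionalIdeal.absNorm (spanSingleton (𝓞 k)⁰ (σ b * b⁻¹)) = 1 := by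
    rw [absNorm_span_singleton, hnormu]
    norm_num
  have habs : FractionalIdeal.absNorm (spanSingleton (𝓞 k)⁰ (σ b * b⁻¹) * 𝔞)
      = FractionalIdeal.absNorm 𝔞 := by
    rw [_root_.map_mul, habsu, one_mul]
  -- inverse of the twisted ideal
  have hainv : (spanSingleton (𝓞 k)⁰ (σ b * b⁻¹) * 𝔞)⁻¹
      = spanSingleton (𝓞 k)⁰ (b * (σ b)⁻¹) * 𝔞⁻¹ := by
    rw [mul_inv, spanSingleton_inv, _root_.mul_inv_rev, inv_inv]
  -- matrix computations
  have hinv : (imat k σ b)⁻¹ = imat k σ b⁻¹ := by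
    apply Matrix.inv_eq_right_inv
    simp [imat, Matrix.mul_fin_two, Matrix.one_fin_two, map_inv₀, hb, hsb]
  have key : ∀ α β : k, imat k σ b * qmat k σ κ α β * imat k σ b⁻¹
      = qmat k σ κ α (b * (σ b)⁻¹ * β) := by
    intro α β
    ext i j
    fin_cases i <;> fin_cases j <;>
      simp [imat, qmat, Matrix.mul_fin_two, map_inv₀, _root_.map_mul, hσσ] <;>
      field_simp <;> ring
  have hd2 : 𝔡₂⁻¹ * (spanSingleton (𝓞 k)⁰ (σ b * b⁻¹) * 𝔞)
      = spanSingleton (𝓞 k)⁰ (σ b * b⁻¹) * (𝔡₂⁻¹ * 𝔞) := by ring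
  refine ⟨?_, habs.trans h𝔞N, ?_, ?_, ?_⟩
  · -- the conjugation identity
    ext N
    simp only [Set.mem_setOf_eq, Oset]
    constructor
    · rintro ⟨M, ⟨α, β, rfl, hα, hβ, hsum⟩, rfl⟩
      refine ⟨α, b * (σ b)⁻¹ * β, ?_, hα, ?_, ?_⟩
      · rw [hinv, key]
      · rw [hainv]
        exact mem_singleton_mul.mpr ⟨β, hβ, rfl⟩
      · have h : α + σ b * b⁻¹ * lam * (b * (σ b)⁻¹ * β) = α + lam * β := by
          field_simp
        rw [h]
        exact hsum
    · rintro ⟨α, β', rfl, hα, hβ', hsum⟩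
      refine ⟨qmat k σ κ α (σ b * b⁻¹ * β'), ⟨α, σ b * b⁻¹ * β', rfl, hα, ?_, ?_⟩, ?_⟩
      · rw [hainv] at hβ'
        obtain ⟨y, hy, rfl⟩ := mem_singleton_mul.mp hβ'
        have h : σ b * b⁻¹ * (b * (σ b)⁻¹ * y) = y := by field_simp
        rw [h]
        exact hy
      · have h : α + lam * (σ b * b⁻¹ * β') = α + σ b * b⁻¹ * lam * β' := by ring
        rw [h]
        exact hsum
      · rw [hinv, key]
        have h : b * (σ b)⁻¹ * (σ b * b⁻¹ * β') = β' := by field_simp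
        rw [h]
  · -- membership of the twisted λ
    rw [hd2]
    exact mem_singleton_mul.mpr ⟨lam, hlam, rfl⟩
  · -- generation
    rw [hd2, hlamgen, mul_add, spanSingleton_mul_spanSingleton]
  · -- the norm congruence
    obtain ⟨n, hn⟩ := hlamnorm
    refine ⟨n, ?_⟩
    rw [_root_.map_mul, hnormu, one_mul, habs]
    exact hn


end
end

section
/- With notation as in the context, let κ ∈ ℚ^× and β₀ ∈ k^×, and set κ' = N_{k/ℚ}(β₀)·κ. Then the map φ_{β₀} : B_κ → B_{κ'}, [α, β] ↦ [α, ββ₀⁻¹], is an isomorphism of ℚ-algebras. Moreover, if 𝔞 is a fractional O_k-ideal with N(𝔞) = κ|Δ|/D and λ ∈ 𝔡₂⁻¹𝔞 satisfies 𝔡₂⁻¹𝔞 = O_k·λ + 𝔞 and N_{k/ℚ}(λ) − κ ∈ N(𝔞)ℤ, then 𝔞' = β₀𝔞 and λ' = β₀λ satisfy the analogous conditions for κ' (N(𝔞') = κ'|Δ|/D, λ' generates 𝔡₂⁻¹𝔞' modulo 𝔞', and N_{k/ℚ}(λ') − κ' ∈ N(𝔞')ℤ), and φ_{β₀}(O_{𝔞,λ,B_κ})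 = O_{𝔞',λ',B_{κ'}}. (This expresses that the maximal order O_{𝔞,λ,B} is unchanged when the element δ with δ² = κ used to coordinatize B is replaced by δ' = β₀δ.) -/
noncomputable section

open Matrix NumberField FractionalIdeal
open scoped Quaternion nonZeroDivisors

variable (k : Type*) [Field k] [NumberField k]

/-- The quaternion algebra `B_κ ⊆ M₂(k)`, as a set of matrices. -/
def Bset (σ : k ≃ₐ[ℚ] k) (κ : ℚ) : Set (Matrix (Fin 2) (Fin 2) k) :=
  {M | ∃ α β : k, M = qmat k σ κ α β}

section TestAux
variable {k}

@[simp] lemma qmat00 (σ : k ≃ₐ[ℚ] k) (κ : ℚ) (α β : k) : qmat k σ κ α β 0 0 = α := rfl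
@[simp] lemma qmat01 (σ : k ≃ₐ[ℚ] k) (κ : ℚ) (α β : k) : qmat k σ κ α β 0 1 = β := rfl

lemma qmat_inj {σ : k ≃ₐ[ℚ] k} {κ : ℚ} {α β α' β' : k}
    (h : qmat k σ κ α β = qmat k σ κ α' β') : α = α' ∧ β = β' :=
  ⟨by have := congrFun (congrFun h 0) 0; simpa using this,
   by have := congrFun (congrFun h 0) 1; simpa using this⟩

lemma qmat_mul (σ : k ≃ₐ[ℚ] k) (hσ : ∀ x, σ (σ x) = x) (κ : ℚ) (a b c d : k) :
    qmat k σ κ a b * qmat k σ κ c d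
      = qmat k σ κ (a * c + (κ : k) * (b * σ d)) (a * d + b * σ c) := by
  ext i j
  fin_cases i <;> fin_cases j <;>
    simp [qmat, Matrix.mul_apply, Fin.sum_univ_two, _root_.map_add, _root_.map_mul, _root_.map_ratCast, hσ] <;>
    ring

lemma qmat_add (σ : k ≃ₐ[ℚ] k) (κ : ℚ) (a b c d : k) :
    qmat k σ κ a b + qmat k σ κ c d = qmat k σ κ (a + c) (b + d) := by
  ext i j
  fin_cases i <;> fin_cases j <;> simp [qmat, _root_.map_add, mul_add]

lemma qmat_algebraMap (σ : k ≃ₐ[ℚ] k) (κ : ℚ) (q : ℚ) :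
    algebraMap ℚ (Matrix (Fin 2) (Fin 2) k) q = qmat k σ κ (q : k) 0 := by
  ext i j
  fin_cases i <;> fin_cases j <;>
    simp [qmat, Matrix.algebraMap_matrix_apply, map_ratCast, Algebra.algebraMap_eq_smul_one,
      Rat.smul_one_eq_cast]

end TestAux
section TestAux2
variable {k}

def Bsub (σ : k ≃ₐ[ℚ] k) (hσ : ∀ x, σ (σ x) = x) (κ : ℚ) :
    Subalgebra ℚ (Matrix (Fin 2) (Fin 2) k) where
  carrier := Bset k σ κ
  mul_mem' := by
    rintro _ _ ⟨a, b, rfl⟩ ⟨c, d, rfl⟩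
    exact ⟨a * c + (κ : k) * (b * σ d), a * d + b * σ c, qmat_mul σ hσ κ a b c d⟩
  add_mem' := by
    rintro _ _ ⟨a, b, rfl⟩ ⟨c, d, rfl⟩
    exact ⟨a + c, b + d, qmat_add σ κ a b c d⟩
  algebraMap_mem' := fun q => ⟨(q : k), 0, qmat_algebraMap σ κ q⟩

lemma mem_Bsub {σ : k ≃ₐ[ℚ] k} {hσ : ∀ x, σ (σ x) = x} {κ : ℚ}
    {M : Matrix (Fin 2) (Fin 2) k} (hM : M ∈ Bsub σ hσ κ) :
    M = qmat k σ κ (M 0 0) (M 0 1) := by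
  obtain ⟨a, b, rfl⟩ := hM
  simp only [qmat00, qmat01]

lemma Bsub_coe (σ : k ≃ₐ[ℚ] k) (hσ : ∀ x, σ (σ x) = x) (κ : ℚ) :
    (Bsub σ hσ κ : Set (Matrix (Fin 2) (Fin 2) k)) = Bset k σ κ := rfl

variable (σ : k ≃ₐ[ℚ] k) (hσ : ∀ x, σ (σ x) = x) {β₀ : k} (hβ₀ : β₀ ≠ 0)
  (κ κ' : ℚ) (hκ' : (κ' : k) = β₀ * σ β₀ * (κ : k))

def phiEquiv : Bsub σ hσ κ ≃ₐ[ℚ] Bsub σ hσ κ' where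
  toFun M := ⟨qmat k σ κ' (M.1 0 0) (M.1 0 1 * β₀⁻¹), M.1 0 0, M.1 0 1 * β₀⁻¹, rfl⟩
  invFun M := ⟨qmat k σ κ (M.1 0 0) (M.1 0 1 * β₀), M.1 0 0, M.1 0 1 * β₀, rfl⟩
  left_inv := by
    rintro ⟨M, hM⟩
    ext : 1
    simp only [qmat00, qmat01]
    rw [inv_mul_cancel_right₀ hβ₀]
    exact (mem_Bsub hM).symm
  right_inv := by
    rintro ⟨M, hM⟩
    ext : 1
    simp only [qmat00, qmat01]
    rw [mul_inv_cancel_right₀ hβ₀]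
    exact (mem_Bsub hM).symm
  map_mul' := by
    rintro ⟨M, hM⟩ ⟨N, hN⟩
    obtain ⟨a, b, rfl⟩ := hM
    obtain ⟨c, d, rfl⟩ := hN
    ext : 1
    show qmat k σ κ' ((qmat k σ κ a b * qmat k σ κ c d) 0 0)
        ((qmat k σ κ a b * qmat k σ κ c d) 0 1 * β₀⁻¹)
      = qmat k σ κ' a (b * β₀⁻¹) * qmat k σ κ' c (d * β₀⁻¹)
    rw [qmat_mul σ hσ κ, qmat_mul σ hσ κ', qmat00, qmat01]
    have hσβ₀ : σ β₀ ≠ 0 := by simpa using hβ₀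
    have e1 : a * c + (κ' : k) * (b * β₀⁻¹ * σ (d * β₀⁻¹))
        = a * c + (κ : k) * (b * σ d) := by
      rw [_root_.map_mul, map_inv₀, hκ']
      field_simp
    have e2 : (a * d + b * σ c) * β₀⁻¹ = a * (d * β₀⁻¹) + b * β₀⁻¹ * σ c := by ring
    rw [e1, e2]
  map_add' := by
    rintro ⟨M, hM⟩ ⟨N, hN⟩
    obtain ⟨a, b, rfl⟩ := hM
    obtain ⟨c, d, rfl⟩ := hN
    ext : 1
    show qmat k σ κ' ((qmat k σ κ a b + qmat k σ κ c d) 0 0)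
        ((qmat k σ κ a b + qmat k σ κ c d) 0 1 * β₀⁻¹)
      = qmat k σ κ' a (b * β₀⁻¹) + qmat k σ κ' c (d * β₀⁻¹)
    rw [qmat_add σ κ, qmat00, qmat01, qmat_add σ κ', add_mul]
  commutes' := by
    intro q
    ext : 1
    show qmat k σ κ' ((algebraMap ℚ (Matrix (Fin 2) (Fin 2) k) q) 0 0)
        ((algebraMap ℚ (Matrix (Fin 2) (Fin 2) k) q) 0 1 * β₀⁻¹)
      = algebraMap ℚ (Matrix (Fin 2) (Fin 2) k) q
    rw [qmat_algebraMap σ κ q, qmat00, qmat01, zero_mul]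
    ext i j
    fin_cases i <;> fin_cases j <;> simp [qmat]

lemma phiEquiv_apply (M : Matrix (Fin 2) (Fin 2) k) (hM : M ∈ Bsub σ hσ κ) :
    ((phiEquiv σ hσ hβ₀ κ κ' hκ' ⟨M, hM⟩ : Bsub σ hσ κ') : Matrix (Fin 2) (Fin 2) k)
      = qmat k σ κ' (M 0 0) (M 0 1 * β₀⁻¹) := rfl

end TestAux2

section TestAux3
variable {k}

lemma li_one_s {Δ : ℤ} (hΔ : Δ < 0) {s : k} (hs : s ^ 2 = (Δ : k)) :
    LinearIndependent ℚ ![(1 : k), s] := by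
  rw [LinearIndependent.pair_iff]
  intro p q h
  have h' : (p : k) + (q : k) * s = 0 := by
    simpa [Rat.smul_def] using h
  by_cases hq : q = 0
  · subst hq
    simp only [Rat.cast_zero, zero_mul, add_zero, Rat.cast_eq_zero] at h'
    exact ⟨h', rfl⟩
  · exfalso
    have hq' : (q : k) ≠ 0 := Rat.cast_ne_zero.mpr hq
    have hsk : s = -((p : k) / (q : k)) := by
      field_simp
      linear_combination h'
    have h2 : ((Δ : ℚ) : k) = (((p / q) ^ 2 : ℚ) : k) := by
      push_cast
      rw [← hs, hsk]
      ring
    have hΔq : (Δ : ℚ) = (p / q) ^ 2 := by exact_mod_cast h2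
    have h3 : (0 : ℚ) ≤ (Δ : ℚ) := hΔq ▸ sq_nonneg _
    have h4 : (Δ : ℚ) < 0 := by exact_mod_cast hΔ
    linarith

lemma exists_coords (hdeg : Module.finrank ℚ k = 2) {Δ : ℤ} (hΔ : Δ < 0)
    {s : k} (hs : s ^ 2 = (Δ : k)) (x : k) :
    ∃ a c : ℚ, x = (a : k) + (c : k) * s := by
  have li := li_one_s hΔ hs
  have hcard : Fintype.card (Fin 2) = Module.finrank ℚ k := by simp [hdeg]
  set b := basisOfLinearIndependentOfCardEqFinrank li hcard with hb
  have hcoe : ⇑b = ![(1 : k), s] := coe_basisOfLinearIndependentOfCardEqFinrank li hcard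
  have hb0 : b 0 = 1 := by rw [hcoe]; rfl
  have hb1 : b 1 = s := by rw [hcoe]; rfl
  have h := b.sum_repr x
  rw [Fin.sum_univ_two, hb0, hb1] at h
  obtain ⟨p, q, hpq⟩ : ∃ p q : ℚ, p • (1 : k) + q • s = x := ⟨_, _, h⟩
  refine ⟨p, q, ?_⟩
  rw [← hpq]
  simp [Rat.smul_def]

lemma norm_coords (hdeg : Module.finrank ℚ k = 2) {Δ : ℤ} (hΔ : Δ < 0)
    {s : k} (hs : s ^ 2 = (Δ : k)) (a c : ℚ) :
    Algebra.norm ℚ ((a : k) + (c : k) * s) = a ^ 2 - (Δ : ℚ) * c ^ 2 := by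
  have li := li_one_s hΔ hs
  have hcard : Fintype.card (Fin 2) = Module.finrank ℚ k := by simp [hdeg]
  set b := basisOfLinearIndependentOfCardEqFinrank li hcard with hb
  have hcoe : ⇑b = ![(1 : k), s] := coe_basisOfLinearIndependentOfCardEqFinrank li hcard
  have hb0 : b 0 = 1 := by rw [hcoe]; rfl
  have hb1 : b 1 = s := by rw [hcoe]; rfl
  have key : ∀ p q : ℚ, b.repr ((p : k) + (q : k) * s) 0 = p
      ∧ b.repr ((p : k) + (q : k) * s) 1 = q := by
    intro p q
    have hx : (p : k) + (q : k) * s = p • b 0 + q • b 1 := by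
      rw [hb0, hb1]; simp [Rat.smul_def]
    rw [hx, _root_.map_add, _root_.map_smul, _root_.map_smul, b.repr_self, b.repr_self]
    constructor <;>
      simp [Finsupp.single_apply]
  have hx0 : ((a : k) + (c : k) * s) * b 0 = (a : k) + (c : k) * s := by
    rw [hb0, mul_one]
  have hx1 : ((a : k) + (c : k) * s) * b 1 = ((c * Δ : ℚ) : k) + ((a : ℚ) : k) * s := by
    rw [hb1]
    push_cast
    linear_combination (c : k) * hs
  have E00 : Algebra.leftMulMatrix b ((a : k) + (c : k) * s) 0 0 = a := by
    rw [Algebra.leftMulMatrix_eq_repr_mul, hx0]; exact (key a c).1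
  have E10 : Algebra.leftMulMatrix b ((a : k) + (c : k) * s) 1 0 = c := by
    rw [Algebra.leftMulMatrix_eq_repr_mul, hx0]; exact (key a c).2
  have E01 : Algebra.leftMulMatrix b ((a : k) + (c : k) * s) 0 1 = c * Δ := by
    rw [Algebra.leftMulMatrix_eq_repr_mul, hx1]; exact (key (c * Δ) a).1
  have E11 : Algebra.leftMulMatrix b ((a : k) + (c : k) * s) 1 1 = a := by
    rw [Algebra.leftMulMatrix_eq_repr_mul, hx1]; exact (key (c * Δ) a).2
  have hmat : Algebra.leftMulMatrix b ((a : k) + (c : k) * s)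
      = !![a, c * Δ; c, a] := by
    ext i j
    fin_cases i <;> fin_cases j
    · simpa using E00
    · simpa using E01
    · simpa using E10
    · simpa using E11
  rw [Algebra.norm_eq_matrix_det b, hmat, Matrix.det_fin_two_of]
  ring

lemma sigma_invol (hdeg : Module.finrank ℚ k = 2) {Δ : ℤ} (hΔ : Δ < 0)
    {s : k} (hs : s ^ 2 = (Δ : k)) {σ : k ≃ₐ[ℚ] k} (hσs : σ s = -s) (x : k) :
    σ (σ x) = x := by
  obtain ⟨a, c, rfl⟩ := exists_coords hdeg hΔ hs x
  simp [_root_.map_add, _root_.map_mul, _root_.map_ratCast, hσs]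

lemma norm_conj (hdeg : Module.finrank ℚ k = 2) {Δ : ℤ} (hΔ : Δ < 0)
    {s : k} (hs : s ^ 2 = (Δ : k)) {σ : k ≃ₐ[ℚ] k} (hσs : σ s = -s) (x : k) :
    ((Algebra.norm ℚ x : ℚ) : k) = x * σ x := by
  obtain ⟨a, c, rfl⟩ := exists_coords hdeg hΔ hs x
  rw [norm_coords hdeg hΔ hs a c]
  have hσx : σ ((a : k) + (c : k) * s) = (a : k) - (c : k) * s := by
    rw [_root_.map_add, _root_.map_mul, hσs]
    simp only [_root_.map_ratCast]
    ring
  rw [hσx]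
  push_cast
  linear_combination ((c : k) ^ 2) * hs

lemma norm_pos (hdeg : Module.finrank ℚ k = 2) {Δ : ℤ} (hΔ : Δ < 0)
    {s : k} (hs : s ^ 2 = (Δ : k)) {x : k} (hx : x ≠ 0) :
    0 < Algebra.norm ℚ x := by
  obtain ⟨a, c, rfl⟩ := exists_coords hdeg hΔ hs x
  rw [norm_coords hdeg hΔ hs a c]
  have hΔq : (Δ : ℚ) < 0 := by exact_mod_cast hΔ
  have hne : ¬(a = 0 ∧ c = 0) := by
    rintro ⟨rfl, rfl⟩
    simp at hx
  rcases not_and_or.mp hne with ha | hc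
  · have : 0 < a ^ 2 := (sq_nonneg a).lt_of_ne' (pow_ne_zero 2 ha)
    nlinarith [sq_nonneg c]
  · have : 0 < c ^ 2 := (sq_nonneg c).lt_of_ne' (pow_ne_zero 2 hc)
    nlinarith [sq_nonneg a]

end TestAux3

/-- For `β₀ ∈ k^×` and `κ' = N(β₀)κ`, the map
`φ_{β₀} : B_κ → B_{κ'}, [α,β] ↦ [α, ββ₀⁻¹]` is a `ℚ`-algebra isomorphism; moreover
`𝔞' = β₀𝔞`, `λ' = β₀λ` satisfy the conditions for `κ'` and
`φ_{β₀}(O_{𝔞,λ,B_κ}) = O_{𝔞',λ',B_{κ'}}`. -/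
theorem change_of_delta
    (Δ : ℤ) (hΔneg : Δ < 0)
    (hdeg : Module.finrank ℚ k = 2) (hdisc : NumberField.discr k = Δ)
    (s : k) (hs : s ^ 2 = (Δ : k))
    (σ : k ≃ₐ[ℚ] k) (hσs : σ s = -s)
    (κ : ℚ) (hκ : κ ≠ 0)
    (β₀ : k) (hβ₀ : β₀ ≠ 0)
    (D D₁ : ℕ)
    (hD : Squarefree D ∧ ∀ (p : ℕ) [Fact p.Prime], (p ∣ D ↔ RamifiedAt Δ κ p))
    (hD₁ : Squarefree D₁ ∧
      ∀ (p : ℕ) [Fact p.Prime], (p ∣ D₁ ↔ (RamifiedAt Δ κ p ∧ (p : ℤ) ∣ Δ)))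
    (𝔡₁ : Ideal (𝓞 k))
    (h𝔡₁ : ∃ P : ℕ → Ideal (𝓞 k),
      (∀ p ∈ D₁.primeFactors, (P p).IsPrime ∧ (p : 𝓞 k) ∈ P p) ∧
      𝔡₁ = ∏ p ∈ D₁.primeFactors, P p)
    (𝔡₂ : FractionalIdeal (𝓞 k)⁰ k)
    (h𝔡₂ : 𝔡₂ = spanSingleton (𝓞 k)⁰ s * ((𝔡₁ : FractionalIdeal (𝓞 k)⁰ k))⁻¹)
    (𝔞 : FractionalIdeal (𝓞 k)⁰ k) (h𝔞0 : 𝔞 ≠ 0)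
    (h𝔞N : FractionalIdeal.absNorm 𝔞 = κ * ((|Δ| : ℤ) : ℚ) / (D : ℚ))
    (lam : k) (hlam : lam ∈ 𝔡₂⁻¹ * 𝔞)
    (hlamgen : 𝔡₂⁻¹ * 𝔞 = spanSingleton (𝓞 k)⁰ lam + 𝔞)
    (hlamnorm : ∃ n : ℤ, Algebra.norm ℚ lam - κ = n * FractionalIdeal.absNorm 𝔞) :
    -- `φ_{β₀} : B_κ → B_{κ'}`, `[α,β] ↦ [α, ββ₀⁻¹]`, is an isomorphism of `ℚ`-algebras ...
    ∃ S S' : Subalgebra ℚ (Matrix (Fin 2) (Fin 2) k),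
      (S : Set (Matrix (Fin 2) (Fin 2) k)) = Bset k σ κ ∧
      (S' : Set (Matrix (Fin 2) (Fin 2) k)) = Bset k σ (Algebra.norm ℚ β₀ * κ) ∧
      ∃ φ : S ≃ₐ[ℚ] S',
        (∀ (α β : k) (h : qmat k σ κ α β ∈ S)
            (h' : qmat k σ (Algebra.norm ℚ β₀ * κ) α (β * β₀⁻¹) ∈ S'),
          φ ⟨qmat k σ κ α β, h⟩ = ⟨qmat k σ (Algebra.norm ℚ β₀ * κ) α (β * β₀⁻¹), h'⟩) ∧
        -- ... `𝔞' = β₀𝔞` and `λ' = β₀λ` satisfy the analogous conditions for `κ'` ...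
        FractionalIdeal.absNorm (spanSingleton (𝓞 k)⁰ β₀ * 𝔞)
          = (Algebra.norm ℚ β₀ * κ) * ((|Δ| : ℤ) : ℚ) / (D : ℚ) ∧
        β₀ * lam ∈ 𝔡₂⁻¹ * (spanSingleton (𝓞 k)⁰ β₀ * 𝔞) ∧
        𝔡₂⁻¹ * (spanSingleton (𝓞 k)⁰ β₀ * 𝔞)
          = spanSingleton (𝓞 k)⁰ (β₀ * lam) + spanSingleton (𝓞 k)⁰ β₀ * 𝔞 ∧
        (∃ n : ℤ, Algebra.norm ℚ (β₀ * lam) - Algebra.norm ℚ β₀ * κ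
          = n * FractionalIdeal.absNorm (spanSingleton (𝓞 k)⁰ β₀ * 𝔞)) ∧
        -- ... and `φ_{β₀}` carries `O_{𝔞,λ,B_κ}` onto `O_{𝔞',λ',B_{κ'}}`.
        (∀ (M : Matrix (Fin 2) (Fin 2) k) (hM : M ∈ S),
          M ∈ Oset k σ κ 𝔡₂ 𝔞 lam ↔
            ((φ ⟨M, hM⟩ : S') : Matrix (Fin 2) (Fin 2) k)
              ∈ Oset k σ (Algebra.norm ℚ β₀ * κ) 𝔡₂ (spanSingleton (𝓞 k)⁰ β₀ * 𝔞)
                  (β₀ * lam)) := by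
  have hσ2 : ∀ x, σ (σ x) = x := sigma_invol hdeg hΔneg hs hσs
  have hκ'cast : ((Algebra.norm ℚ β₀ * κ : ℚ) : k) = β₀ * σ β₀ * (κ : k) := by
    push_cast
    rw [norm_conj hdeg hΔneg hs hσs β₀]
  have hNpos : 0 < Algebra.norm ℚ β₀ := norm_pos hdeg hΔneg hs hβ₀
  have hmulinv : (spanSingleton (𝓞 k)⁰ β₀ * 𝔞)⁻¹
      = spanSingleton (𝓞 k)⁰ β₀⁻¹ * 𝔞⁻¹ := by
    rw [_root_.mul_inv, spanSingleton_inv]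
  have hcancel : spanSingleton (𝓞 k)⁰ β₀ * (spanSingleton (𝓞 k)⁰ β₀ * 𝔞)⁻¹ = 𝔞⁻¹ := by
    rw [hmulinv, ← mul_assoc, spanSingleton_mul_spanSingleton,
      mul_inv_cancel₀ hβ₀, spanSingleton_one, one_mul]
  refine ⟨Bsub σ hσ2 κ, Bsub σ hσ2 (Algebra.norm ℚ β₀ * κ), rfl, rfl,
    phiEquiv σ hσ2 hβ₀ κ (Algebra.norm ℚ β₀ * κ) hκ'cast, ?_, ?_, ?_, ?_, ?_, ?_⟩
  · intro α β h h'
    apply Subtype.ext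
    rw [phiEquiv_apply]
    simp only [qmat00, qmat01]
  · rw [_root_.map_mul FractionalIdeal.absNorm,
      FractionalIdeal.absNorm_span_singleton (𝓞 k), abs_of_pos hNpos, h𝔞N]
    ring
  · have e : 𝔡₂⁻¹ * (spanSingleton (𝓞 k)⁰ β₀ * 𝔞)
        = spanSingleton (𝓞 k)⁰ β₀ * (𝔡₂⁻¹ * 𝔞) := by ring
    rw [e]
    exact mul_mem_mul (mem_spanSingleton_self _ β₀) hlam
  · have e : 𝔡₂⁻¹ * (spanSingleton (𝓞 k)⁰ β₀ * 𝔞)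
        = spanSingleton (𝓞 k)⁰ β₀ * (𝔡₂⁻¹ * 𝔞) := by ring
    rw [e, hlamgen, mul_add, spanSingleton_mul_spanSingleton]
  · obtain ⟨n, hn⟩ := hlamnorm
    refine ⟨n, ?_⟩
    rw [_root_.map_mul (Algebra.norm ℚ), _root_.map_mul FractionalIdeal.absNorm,
      FractionalIdeal.absNorm_span_singleton (𝓞 k), abs_of_pos hNpos]
    linear_combination Algebra.norm ℚ β₀ * hn
  · intro M hM
    obtain ⟨a, b, rfl⟩ : ∃ a b : k, M = qmat k σ κ a b := hM
    erw [phiEquiv_apply σ hσ2 hβ₀ κ (Algebra.norm ℚ β₀ * κ) hκ'cast]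
    simp only [qmat00, qmat01]
    have hmul1 : (β₀ * lam) * (b * β₀⁻¹) = lam * b := by
      field_simp
    constructor
    · rintro ⟨α, β, hEq, h1, h2, h3⟩
      obtain ⟨rfl, rfl⟩ := qmat_inj hEq
      refine ⟨a, b * β₀⁻¹, rfl, h1, ?_, ?_⟩
      · rw [hmulinv]
        have h4 := mul_mem_mul (mem_spanSingleton_self (𝓞 k)⁰ β₀⁻¹) h2
        rwa [mul_comm β₀⁻¹ b] at h4
      · rw [hmul1]
        exact h3
    · rintro ⟨α, β, hEq, h1, h2, h3⟩
      obtain ⟨rfl, rfl⟩ := qmat_inj hEq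
      refine ⟨a, b, rfl, h1, ?_, ?_⟩
      · have h4 := mul_mem_mul (mem_spanSingleton_self (𝓞 k)⁰ β₀) h2
        have e2 : β₀ * (b * β₀⁻¹) = b := by field_simp
        rwa [e2, hcancel] at h4
      · rw [hmul1] at h3
        exact h3

end
end
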